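/- Let p and q be distinct, equal-length words over a finite alphabet Σ such that the set of proper borders of p equals the set of proper borders of q. Then for every n, the map φ_L, which iteratively replaces the leftmost occurrence of q with p until no occurrence of q remains, is a bijection from the set A_n(p) of length-n words avoiding p to the set A_n(q) of length-n words avoiding q (Main Theorem). -/

import Mathlib

open List

/-- A nonempty word `x` is a border of `p` if it is both a prefix and a suffix of `p`. -/
def Border {α : Type*} (x p : List α) : Prop := x ≠ [] ∧ x <+: p ∧ x <:+ p

/-- A proper border is a border different from the word itself. -/
def ProperBorder {α : Type*} (x p : List α) : Prop := Border x p ∧ x ≠ p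

/-- The border length set of `p`. -/
def borderLengths {α : Type*} (p : List α) : Set ℕ :=
  {n | ∃ x, Border x p ∧ x.length = n}

/-- `replL q p w` replaces the leftmost contiguous occurrence of `q` in `w` by `p`
(identity if there is no occurrence). -/
def replL {α : Type*} [DecidableEq α] (q p : List α) : List α → List α
  | [] => []
  | a :: w => if q <+: (a :: w) then p ++ (a :: w).drop q.length else a :: replL q p w

/-- `replR p q w` replaces the rightmost contiguous occurrence of `p` in `w` by `q`
(identity if there is no occurrence). -/
def replR {α : Type*} [DecidableEq α] (p q : List α) : List α → List α
  | [] => []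
  | a :: w =>
    if p <:+: w then a :: replR p q w
    else if p <+: (a :: w) then q ++ (a :: w).drop p.length
    else a :: w

/-- `phiL q p w` iterates `replL q p` a minimal number of times so that no occurrence
of `q` remains (if such an iterate exists). -/
noncomputable def phiL {α : Type*} [DecidableEq α] (q p : List α) (w : List α) : List α :=
  (replL q p)^[sInf {i | ¬ q <:+: (replL q p)^[i] w}] w

/-- `phiR p q w` iterates `replR p q` a minimal number of times so that no occurrence
of `p` remains (if such an iterate exists). -/
noncomputable def phiR {α : Type*} [DecidableEq α] (p q : List α) (w : List α) : List α :=
  (replR p q)^[sInf {j | ¬ p <:+: (replR p q)^[j] w}] w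

namespace StmtAux
variable {α : Type*} [DecidableEq α]

/-- occurrence of `u` in `w` starting at index `i` -/
def OccAt (u w : List α) (i : ℕ) : Prop := u <+: w.drop i

lemma occAt_append (u s t : List α) : OccAt u (s ++ u ++ t) s.length := by
  unfold OccAt
  rw [append_assoc, drop_left]
  exact prefix_append u t

lemma infix_iff_occ {u w : List α} : u <:+: w ↔ ∃ i, OccAt u w i := by
  constructor
  · rintro ⟨s, t, rfl⟩; exact ⟨s.length, occAt_append u s t⟩
  · rintro ⟨i, ⟨t, ht⟩⟩
    exact ⟨w.take i, t, by rw [append_assoc, ht, take_append_drop]⟩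

lemma occAt_cons_succ {u w : List α} {a : α} {j : ℕ} :
    OccAt u (a :: w) (j + 1) ↔ OccAt u w j := Iff.rfl

lemma replL_spec {q p : List α} (hq : q ≠ []) {w : List α} (h : q <:+: w) :
    ∃ s t : List α, w = s ++ q ++ t ∧ replL q p w = s ++ p ++ t ∧
      ∀ j < s.length, ¬ OccAt q w j := by
  induction w with
  | nil => exact absurd (List.infix_nil.mp h) hq
  | cons a w ih =>
    by_cases hp : q <+: a :: w
    · obtain ⟨t, ht⟩ := hp
      refine ⟨[], t, by simpa using ht.symm, ?_, by simp⟩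
      have hp' : q <+: a :: w := ⟨t, ht⟩
      simp only [replL, if_pos hp', nil_append]
      rw [← ht, drop_left]
    · have h' : q <:+: w := (List.infix_cons_iff.mp h).resolve_left hp
      obtain ⟨s, t, h1, h2, h3⟩ := ih h'
      refine ⟨a :: s, t, by simp [h1], ?_, ?_⟩
      · simp only [replL, if_neg hp, cons_append, h2]
      · intro j hj
        cases j with
        | zero => exact fun hc => hp hc
        | succ j =>
          rw [occAt_cons_succ]
          exact h3 j (by simpa using hj)

lemma replL_of_not_infix {q p : List α} {w : List α} (h : ¬ q <:+: w) : replL q p w = w := by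
  induction w with
  | nil => rfl
  | cons a w ih =>
    have hp : ¬ q <+: a :: w := fun hc => h hc.isInfix
    have h' : ¬ q <:+: w := fun hc => h (List.infix_cons_iff.mpr (Or.inr hc))
    simp only [replL, if_neg hp, ih h']

lemma replL_eq_of_leftmost {q p : List α} (hq : q ≠ []) {w s t : List α}
    (h1 : w = s ++ q ++ t) (h2 : ∀ j < s.length, ¬ OccAt q w j) :
    replL q p w = s ++ p ++ t := by
  obtain ⟨s', t', g1, g2, g3⟩ := replL_spec (p := p) hq ⟨s, t, h1.symm⟩
  have e1 : ¬ s.length < s'.length := fun hc => g3 s.length hc (h1 ▸ occAt_append q s t)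
  have e2 : ¬ s'.length < s.length := fun hc => h2 s'.length hc (g1 ▸ occAt_append q s' t')
  have hl : s.length = s'.length := by omega
  have hs : s = s' := by
    have := g1 ▸ h1
    calc s = (s ++ (q ++ t)).take s.length := by rw [take_left]
    _ = (s' ++ (q ++ t')).take s'.length := by rw [← append_assoc, ← append_assoc, ← this, hl]
    _ = s' := by rw [take_left]
  subst hs
  have ht : t = t' := by
    have h5 := g1 ▸ h1
    rw [append_assoc, append_assoc, append_cancel_left_eq, append_cancel_left_eq] at h5
    exact h5.symm
  rw [g2, ht]

lemma replR_spec {p q : List α} (hp : p ≠ []) {w : List α} (h : p <:+: w) :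
    ∃ s t : List α, w = s ++ p ++ t ∧ replR p q w = s ++ q ++ t ∧
      ∀ j, s.length < j → ¬ OccAt p w j := by
  induction w with
  | nil => exact absurd (List.infix_nil.mp h) hp
  | cons a w ih =>
    by_cases h1 : p <:+: w
    · obtain ⟨s, t, g1, g2, g3⟩ := ih h1
      refine ⟨a :: s, t, by simp [g1], ?_, ?_⟩
      · simp only [replR, if_pos h1, g2, cons_append]
      · intro j hj
        cases j with
        | zero => omega
        | succ j =>
          rw [occAt_cons_succ]
          exact g3 j (by simpa using hj)
    · have h2 : p <+: a :: w := (List.infix_cons_iff.mp h).resolve_right h1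
      obtain ⟨t, ht⟩ := h2
      refine ⟨[], t, by simpa using ht.symm, ?_, ?_⟩
      · have h2' : p <+: a :: w := ⟨t, ht⟩
        simp only [replR, if_neg h1, if_pos h2', nil_append]
        rw [← ht, drop_left]
      · intro j hj
        cases j with
        | zero => omega
        | succ j =>
          rw [occAt_cons_succ]
          exact fun hc => h1 (infix_iff_occ.mpr ⟨j, hc⟩)

lemma replR_of_not_infix {p q : List α} {w : List α} (h : ¬ p <:+: w) : replR p q w = w := by
  cases w with
  | nil => rfl
  | cons a w =>
    have h1 : ¬ p <:+: w := fun hc => h (List.infix_cons_iff.mpr (Or.inr hc))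
    have h2 : ¬ p <+: a :: w := fun hc => h hc.isInfix
    simp only [replR, if_neg h1, if_neg h2]

lemma replR_eq_of_rightmost {p q : List α} (hp : p ≠ []) {w s t : List α}
    (h1 : w = s ++ p ++ t) (h2 : ∀ j, s.length < j → ¬ OccAt p w j) :
    replR p q w = s ++ q ++ t := by
  obtain ⟨s', t', g1, g2, g3⟩ := replR_spec (q := q) hp ⟨s, t, h1.symm⟩
  have e1 : ¬ s.length < s'.length := fun hc => h2 s'.length hc (g1 ▸ occAt_append p s' t')
  have e2 : ¬ s'.length < s.length := fun hc => g3 s.length hc (h1 ▸ occAt_append p s t)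
  have hl : s.length = s'.length := by omega
  have hs : s = s' := by
    have := g1 ▸ h1
    calc s = (s ++ (p ++ t)).take s.length := by rw [take_left]
    _ = (s' ++ (p ++ t')).take s'.length := by rw [← append_assoc, ← append_assoc, ← this, hl]
    _ = s' := by rw [take_left]
  subst hs
  have ht : t = t' := by
    have h5 := g1 ▸ h1
    rw [append_assoc, append_assoc, append_cancel_left_eq, append_cancel_left_eq] at h5
    exact h5.symm
  rw [g2, ht]
end StmtAux

namespace StmtAux
variable {α : Type*} [DecidableEq α]

def mu (r : α → ℕ) : List α → ℕ
  | [] => 0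
  | a :: u => r a * 2 ^ u.length + mu r u

lemma mu_lt {r : α → ℕ} (hr : ∀ a, r a ≤ 1) (w : List α) : mu r w < 2 ^ w.length := by
  induction w with
  | nil => simp [mu]
  | cons a u ih =>
    have := hr a
    simp only [mu, length_cons, pow_succ]
    nlinarith [ih]

lemma mu_append (r : α → ℕ) (u v : List α) :
    mu r (u ++ v) = mu r u * 2 ^ v.length + mu r v := by
  induction u with
  | nil => simp [mu]
  | cons a u ih =>
    show r a * 2 ^ (u ++ v).length + mu r (u ++ v) = _
    rw [length_append, ih, pow_add]
    simp only [mu]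
    ring

lemma exists_mu {p q : List α} (hne : p ≠ q) (hlen : p.length = q.length) :
    ∃ r : α → ℕ, (∀ a, r a ≤ 1) ∧ mu r p < mu r q := by
  induction p generalizing q with
  | nil =>
    cases q with
    | nil => exact absurd rfl hne
    | cons b q' => simp at hlen
  | cons a0 p' ih =>
    cases q with
    | nil => simp at hlen
    | cons b q' =>
      have hlen' : p'.length = q'.length := by simpa using hlen
      by_cases hab : a0 = b
      · subst hab
        have hne' : p' ≠ q' := fun hc => hne (by rw [hc])
        obtain ⟨r, hr, hmu⟩ := ih hne' hlen'
        exact ⟨r, hr, by simp only [mu, hlen']; omega⟩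
      · set r : α → ℕ := fun x => if x = b then 1 else 0 with hr
        have hr1 : ∀ x, r x ≤ 1 := fun x => by simp only [hr]; split <;> omega
        refine ⟨r, hr1, ?_⟩
        have ha : r a0 = 0 := by simp [hr, hab]
        have hb : r b = 1 := by simp [hr]
        show r a0 * 2 ^ p'.length + mu r p' < r b * 2 ^ q'.length + mu r q'
        rw [ha, hb]
        have h1 := mu_lt hr1 p'
        have h2 : (2:ℕ) ^ p'.length = 2 ^ q'.length := by rw [hlen']
        omega

lemma mu_replL_lt {q p : List α} (hq : q ≠ []) (hlen : p.length = q.length)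
    {r : α → ℕ} (hmu : mu r p < mu r q) {w : List α} (h : q <:+: w) :
    mu r (replL q p w) < mu r w := by
  obtain ⟨s, t, h1, h2, _⟩ := replL_spec (p := p) hq h
  rw [h2, h1, append_assoc, append_assoc, mu_append, mu_append, mu_append, mu_append,
    length_append, length_append, hlen]
  have : mu r p * 2 ^ t.length < mu r q * 2 ^ t.length :=
    (Nat.mul_lt_mul_right (Nat.two_pow_pos _)).mpr hmu
  omega

lemma exists_no_infix {q p : List α} (hne : p ≠ q) (hlen : p.length = q.length)
    (hq : q ≠ []) (w : List α) : ∃ i, ¬ q <:+: (replL q p)^[i] w := by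
  obtain ⟨r, _, hmu⟩ := exists_mu hne hlen
  suffices H : ∀ N w, mu r w < N → ∃ i, ¬ q <:+: (replL q p)^[i] w from
    H (mu r w + 1) w (Nat.lt_succ_self _)
  intro N
  induction N with
  | zero => omega
  | succ N ih =>
    intro w hw
    by_cases h : q <:+: w
    · obtain ⟨i, hi⟩ := ih (replL q p w)
        (lt_of_lt_of_le (mu_replL_lt hq hlen hmu h) (by omega))
      exact ⟨i + 1, by rwa [Function.iterate_succ_apply]⟩
    · exact ⟨0, h⟩

lemma phiL_of_not_infix {q p : List α} {w : List α} (h : ¬ q <:+: w) :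
    phiL q p w = w := by
  unfold phiL
  have : sInf {i | ¬ q <:+: (replL q p)^[i] w} = 0 :=
    Nat.sInf_eq_zero.mpr (Or.inl (by simpa using h))
  rw [this]
  rfl

lemma not_infix_phiL {q p : List α} (hne : p ≠ q) (hlen : p.length = q.length)
    (hq : q ≠ []) (w : List α) : ¬ q <:+: phiL q p w :=
  Nat.sInf_mem (exists_no_infix hne hlen hq w)

lemma phiL_step {q p : List α} (hne : p ≠ q) (hlen : p.length = q.length)
    (hq : q ≠ []) {w : List α} (h : q <:+: w) :
    phiL q p w = phiL q p (replL q p w) := by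
  unfold phiL
  have hne1 : {i | ¬ q <:+: (replL q p)^[i] (replL q p w)}.Nonempty :=
    exists_no_infix hne hlen hq (replL q p w)
  have hne0 : {i | ¬ q <:+: (replL q p)^[i] w}.Nonempty := exists_no_infix hne hlen hq w
  set n' := sInf {i | ¬ q <:+: (replL q p)^[i] (replL q p w)} with hn'
  have key : sInf {i | ¬ q <:+: (replL q p)^[i] w} = n' + 1 := by
    apply Nat.le_antisymm
    · apply Nat.sInf_le
      show ¬ q <:+: (replL q p)^[n'+1] w
      rw [Function.iterate_succ_apply]
      exact Nat.sInf_mem hne1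
    · have hk := Nat.sInf_mem hne0
      set k := sInf {i | ¬ q <:+: (replL q p)^[i] w} with hkdef
      have hk0 : k ≠ 0 := by
        intro hc
        rw [hc] at hk
        exact hk (by simpa using h)
      obtain ⟨k', hk'⟩ : ∃ k', k = k' + 1 := ⟨k - 1, by omega⟩
      rw [hk'] at hk
      have hmem : k' ∈ {i | ¬ q <:+: (replL q p)^[i] (replL q p w)} := by
        simpa [Function.iterate_succ_apply] using hk
      have := Nat.sInf_le hmem
      omega
  rw [key, Function.iterate_succ_apply]

lemma replL_length {q p : List α} (hq : q ≠ []) (hlen : p.length = q.length)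
    (w : List α) : (replL q p w).length = w.length := by
  by_cases h : q <:+: w
  · obtain ⟨s, t, h1, h2, _⟩ := replL_spec (p := p) hq h
    rw [h2, h1]
    simp [hlen]
  · rw [replL_of_not_infix h]

lemma iterate_replL_length {q p : List α} (hq : q ≠ []) (hlen : p.length = q.length)
    (k : ℕ) : ∀ w : List α, ((replL q p)^[k] w).length = w.length := by
  induction k with
  | zero => intro w; rfl
  | succ k ih =>
    intro w
    rw [Function.iterate_succ_apply, ih (replL q p w), replL_length hq hlen]

lemma phiL_length {q p : List α} (hq : q ≠ []) (hlen : p.length = q.length)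
    (w : List α) : (phiL q p w).length = w.length := by
  unfold phiL
  rw [iterate_replL_length hq hlen]

end StmtAux

namespace StmtAux
variable {α : Type*} [DecidableEq α]

lemma occAt_of_reverse {u w : List α} {j : ℕ} (h : OccAt u w.reverse j)
    (hj : j + u.length ≤ w.length) : OccAt u.reverse w (w.length - u.length - j) := by
  have h1 : u <+: (w.take (w.length - j)).reverse := by
    rw [← List.drop_reverse]
    exact h
  have h2 : u.reverse <:+ w.take (w.length - j) := by
    rw [← reverse_reverse u] at h1
    exact List.reverse_prefix.mp h1
  obtain ⟨r, hr⟩ := h2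
  have hrl : r.length = w.length - j - u.length := by
    have h4 := congrArg List.length hr
    rw [length_append, length_reverse, length_take] at h4
    omega
  show u.reverse <+: w.drop (w.length - u.length - j)
  have hw : w = r ++ u.reverse ++ w.drop (w.length - j) := by
    conv_lhs => rw [← take_append_drop (w.length - j) w, ← hr]
  have heq : w.length - u.length - j = r.length := by omega
  have hd : w.drop r.length = u.reverse ++ w.drop (w.length - j) := by
    conv_lhs => rw [hw, append_assoc]
    rw [drop_left]
  rw [heq, hd]
  exact prefix_append _ _

lemma replR_reverse {p q : List α} (hp : p ≠ []) (w : List α) :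
    replR p q w = (replL p.reverse q.reverse w.reverse).reverse := by
  by_cases h : p <:+: w
  · obtain ⟨s, t, h1, h2, h3⟩ := replR_spec (q := q) hp h
    have hwr : w.reverse = t.reverse ++ p.reverse ++ s.reverse := by
      rw [h1]; simp [append_assoc]
    have hlm : ∀ j < t.reverse.length, ¬ OccAt p.reverse w.reverse j := by
      intro j hj hocc
      rw [length_reverse] at hj
      have hlw : w.length = s.length + p.length + t.length := by
        rw [h1]; simp; omega
      have hple : j + p.reverse.length ≤ w.length := by
        rw [length_reverse]; omega
      have := occAt_of_reverse hocc hple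
      rw [reverse_reverse, length_reverse] at this
      exact h3 (w.length - p.length - j) (by omega) this
    rw [h2, replL_eq_of_leftmost (by simpa using hp) hwr hlm]
    simp [append_assoc]
  · rw [replR_of_not_infix h, replL_of_not_infix (by rwa [List.reverse_infix]),
      reverse_reverse]

lemma iterate_replR_reverse {p q : List α} (hp : p ≠ []) (k : ℕ) (w : List α) :
    (replR p q)^[k] w = ((replL p.reverse q.reverse)^[k] w.reverse).reverse := by
  induction k generalizing w with
  | zero => simp
  | succ k ih =>
    rw [Function.iterate_succ_apply, Function.iterate_succ_apply, ih,
      replR_reverse hp w, reverse_reverse]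

lemma phiR_reverse {p q : List α} (hp : p ≠ []) (w : List α) :
    phiR p q w = (phiL p.reverse q.reverse w.reverse).reverse := by
  unfold phiR phiL
  have hset : {j | ¬ p <:+: (replR p q)^[j] w}
      = {i | ¬ p.reverse <:+: (replL p.reverse q.reverse)^[i] w.reverse} := by
    ext j
    simp only [Set.mem_setOf_eq, iterate_replR_reverse hp]
    rw [show p <:+: ((replL p.reverse q.reverse)^[j] w.reverse).reverse
      ↔ p.reverse <:+: (replL p.reverse q.reverse)^[j] w.reverse from
      by rw [← List.reverse_infix, reverse_reverse]]
  rw [hset, iterate_replR_reverse hp]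

end StmtAux

namespace StmtAux
variable {α : Type*} [DecidableEq α]

/-- `p` has a border of length `k` -/
def HB (p : List α) (k : ℕ) : Prop :=
  0 < k ∧ k < p.length ∧ p.take k = p.drop (p.length - k)

lemma border_transfer {p q : List α} (hlen : p.length = q.length)
    (hpb : {x | ProperBorder x p} = {x | ProperBorder x q}) {k : ℕ} (h : HB p k) :
    q.take k = p.take k ∧ q.drop (q.length - k) = p.take k := by
  obtain ⟨hk0, hkm, htk⟩ := h
  have hxlen : (p.take k).length = k := by rw [length_take]; omega
  have hB : ProperBorder (p.take k) p := by
    refine ⟨⟨?_, take_prefix k p, ?_⟩, ?_⟩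
    · intro hc
      rw [hc] at hxlen
      simp at hxlen
      omega
    · rw [htk]; exact drop_suffix _ _
    · intro hc
      have := congrArg List.length hc
      rw [hxlen] at this
      omega
  have hBq : ProperBorder (p.take k) q := by
    have : p.take k ∈ {x | ProperBorder x q} := hpb ▸ hB
    exact this
  obtain ⟨⟨_, hpre, hsuf⟩, _⟩ := hBq
  constructor
  · have := List.prefix_iff_eq_take.mp hpre
    rw [hxlen] at this
    exact this.symm
  · have := List.suffix_iff_eq_drop.mp hsuf
    rw [hxlen] at this
    exact this.symm

/-- The key invariant: every occurrence of `p` strictly to the right of the leftmost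
occurrence of `q` overlaps it, with overlap length not a border length of `p`. -/
def GoodL (q p w : List α) : Prop :=
  ∀ i j : ℕ, OccAt q w i → (∀ i' < i, ¬ OccAt q w i') → OccAt p w j → i < j →
    j < i + p.length ∧ ¬ HB p (i + p.length - j)

lemma goodL_of_not_infix {q p w : List α} (h : ¬ p <:+: w) : GoodL q p w :=
  fun _ j _ _ hocc _ => absurd (infix_iff_occ.mpr ⟨j, hocc⟩) h

lemma no_p_right {p q : List α} (hlen : p.length = q.length)
    (hpb : {x | ProperBorder x p} = {x | ProperBorder x q}) (hq : q ≠ [])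
    {s t : List α} (hlm : ∀ j < s.length, ¬ OccAt q (s ++ q ++ t) j)
    (hgood : GoodL q p (s ++ q ++ t)) :
    ∀ j, s.length < j → ¬ OccAt p (s ++ p ++ t) j := by
  have hm : 0 < p.length := by
    rw [hlen]
    exact length_pos_iff.mpr hq
  have hqocc : OccAt q (s ++ q ++ t) s.length := occAt_append q s t
  have good : ∀ j, OccAt p (s ++ q ++ t) j → s.length < j →
      j < s.length + p.length ∧ ¬ HB p (s.length + p.length - j) :=
    fun j h1 h2 => hgood s.length j hqocc hlm h1 h2
  intro j hj hocc
  rw [show s ++ p ++ t = s ++ (p ++ t) from append_assoc s p t] at hocc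
  rcases lt_or_ge j (s.length + p.length) with hcase | hcase
  · -- overlapping case : s.length < j < s.length + p.length
    have hje : j = s.length + (j - s.length) := by omega
    set e := j - s.length with he
    have he0 : 0 < e := by omega
    have hem : e < p.length := by omega
    set k := p.length - e with hkdef
    have hd1 : (s ++ (p ++ t)).drop j = p.drop e ++ t := by
      rw [hje, List.drop_length_add_append e, drop_append_of_le_length (by omega)]
    have hocc1 : p <+: p.drop e ++ t := by
      rw [← hd1]; exact hocc
    have hdp : p.drop e <+: p :=
      prefix_of_prefix_length_le (prefix_append _ _) hocc1 (by rw [length_drop]; omega)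
    have htk : p.drop e = p.take k := by
      have h5 := List.prefix_iff_eq_take.mp hdp
      rw [length_drop] at h5
      exact h5
    have hHB : HB p k := by
      refine ⟨by omega, by omega, ?_⟩
      rw [show p.length - k = e by omega]
      exact htk.symm
    obtain ⟨hq1, hq2⟩ := border_transfer hlen hpb hHB
    have hd2 : (s ++ q ++ t).drop j = q.drop e ++ t := by
      rw [append_assoc, hje, List.drop_length_add_append e, drop_append_of_le_length (by omega)]
    have hqe : q.drop e = p.take k := by
      rw [show e = q.length - k by omega]
      exact hq2
    have hdkt : p.drop k <+: t := by
      have h5 : p.take k ++ p.drop k <+: p.take k ++ t := by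
        rw [take_append_drop, ← htk]
        exact hocc1
      exact (prefix_append_right_inj _).mp h5
    have hocc2 : OccAt p (s ++ q ++ t) j := by
      show p <+: (s ++ q ++ t).drop j
      rw [hd2, hqe]
      conv_lhs => rw [← take_append_drop k p]
      exact (prefix_append_right_inj _).mpr (hdkt.trans (prefix_rfl.trans (prefix_refl t)) )
    have hres := good j hocc2 hj
    exact hres.2 (by rw [show s.length + p.length - j = k by omega]; exact hHB)
  · -- disjoint case : j ≥ s.length + p.length
    have hd1 : (s ++ (p ++ t)).drop j = t.drop (j - (s.length + p.length)) := by
      have h6 := List.drop_length_add_append (l₁ := s ++ p) (l₂ := t) (j - (s.length + p.length))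
      rw [append_assoc, show (s ++ p).length = s.length + p.length by simp,
        show s.length + p.length + (j - (s.length + p.length)) = j by omega] at h6
      exact h6
    have hd2 : (s ++ q ++ t).drop j = t.drop (j - (s.length + p.length)) := by
      have h6 := List.drop_length_add_append (l₁ := s ++ q) (l₂ := t) (j - (s.length + p.length))
      rw [show (s ++ q).length = s.length + p.length by simp [hlen],
        show s.length + p.length + (j - (s.length + p.length)) = j by omega] at h6
      exact h6
    have hocc2 : OccAt p (s ++ q ++ t) j := by
      show p <+: (s ++ q ++ t).drop j
      rw [hd2, ← hd1]
      exact hocc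
    have := (good j hocc2 (by omega)).1
    omega

end StmtAux

namespace StmtAux
variable {α : Type*} [DecidableEq α]

lemma replR_replL {p q : List α} (hlen : p.length = q.length)
    (hpb : {x | ProperBorder x p} = {x | ProperBorder x q}) (hq : q ≠ []) (hp : p ≠ [])
    {w : List α} (hgood : GoodL q p w) (h : q <:+: w) :
    replR p q (replL q p w) = w ∧ p <:+: replL q p w := by
  obtain ⟨s, t, h1, h2, h3⟩ := replL_spec (p := p) hq h
  subst h1
  rw [h2]
  exact ⟨replR_eq_of_rightmost hp rfl (no_p_right hlen hpb hq h3 hgood), ⟨s, t, rfl⟩⟩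

lemma goodL_replL {p q : List α} (hlen : p.length = q.length)
    (hpb : {x | ProperBorder x p} = {x | ProperBorder x q}) (hq : q ≠ [])
    {w : List α} (hgood : GoodL q p w) (h : q <:+: w) :
    GoodL q p (replL q p w) := by
  have hm : 0 < p.length := by rw [hlen]; exact length_pos_iff.mpr hq
  obtain ⟨s, t, h1, h2, h3⟩ := replL_spec (p := p) hq h
  subst h1
  rw [h2]
  intro i' j hq'occ hlm' hpocc hij
  -- no occurrence of p to the right of s.length in s ++ p ++ t
  have hnp := no_p_right hlen hpb hq h3 hgood
  have hji : j ≤ s.length := by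
    by_contra hc
    exact hnp j (by omega) hpocc
  have hi'i : i' < s.length := by omega
  -- drop computations within the prefix s
  have hdw' : ∀ x : List α, ∀ u, u ≤ s.length →
      (s ++ x ++ t).drop u = s.drop u ++ (x ++ t) := by
    intro x u hu
    rw [append_assoc]
    exact drop_append_of_le_length hu
  -- Step B : s.length < i' + p.length
  have hB : s.length < i' + p.length := by
    by_contra hc
    push_neg at hc
    have hq'occ' : q <+: s.drop i' ++ (p ++ t) := by
      rw [← hdw' p i' (by omega)]
      exact hq'occ
    have hqD : q <+: s.drop i' :=
      prefix_of_prefix_length_le hq'occ' (prefix_append _ _)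
        (by rw [length_drop]; omega)
    have : OccAt q (s ++ q ++ t) i' := by
      show q <+: (s ++ q ++ t).drop i'
      rw [hdw' q i' (by omega)]
      exact hqD.trans (prefix_append _ _)
    exact h3 i' hi'i this
  refine ⟨by omega, ?_⟩
  intro hHB2
  obtain ⟨hq1, hq2⟩ := border_transfer hlen hpb hHB2
  set k := i' + p.length - j with hk
  have hk0 : 0 < k := by omega
  have hkm : k < p.length := by omega
  by_cases hji' : j = s.length
  · -- the occurrence of p at j is the freshly written one
    subst hji'
    set e := s.length - i' with he
    have he0 : 0 < e := by omega
    have hem : e < p.length := by omega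
    have hq'occ' : q <+: s.drop i' ++ (p ++ t) := by
      rw [← hdw' p i' (by omega)]
      exact hq'occ
    have hDlen : (s.drop i').length = e := by rw [length_drop]
    have hDq : s.drop i' <+: q := by
      refine prefix_of_prefix_length_le (prefix_append _ _) hq'occ' ?_
      rw [hDlen]; omega
    have hDeq : s.drop i' = q.take e := by
      have h5 := List.prefix_iff_eq_take.mp hDq
      rw [hDlen] at h5
      exact h5
    have hqdrop : q.drop e <+: q ++ t := by
      have h6 : q.drop e = p.take k := by
        rw [show e = q.length - k by omega]
        exact hq2
      rw [h6, ← hq1]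
      exact (take_prefix _ _).trans (prefix_append _ _)
    have : OccAt q (s ++ q ++ t) i' := by
      show q <+: (s ++ q ++ t).drop i'
      rw [hdw' q i' (by omega), hDeq]
      conv_lhs => rw [← take_append_drop e q]
      exact (prefix_append_right_inj _).mpr hqdrop
    exact h3 i' hi'i this
  · -- j < s.length : an occurrence of p overlapping s from inside
    have hjs : j < s.length := by omega
    set e := s.length - j with he
    have he0 : 0 < e := by omega
    have hem : e < p.length := by omega
    have hpocc' : p <+: s.drop j ++ (p ++ t) := by
      rw [← hdw' p j (by omega)]
      exact hpocc
    have hDlen : (s.drop j).length = e := by rw [length_drop]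
    have hDp : s.drop j <+: p := by
      refine prefix_of_prefix_length_le (prefix_append _ _) hpocc' ?_
      rw [hDlen]; omega
    have hDeq : s.drop j = p.take e := by
      have h5 := List.prefix_iff_eq_take.mp hDp
      rw [hDlen] at h5
      exact h5
    have hrest : p.drop e <+: p ++ t := by
      have h5 : p.take e ++ p.drop e <+: p.take e ++ (p ++ t) := by
        rw [take_append_drop, ← hDeq]
        exact hpocc'
      exact (prefix_append_right_inj _).mp h5
    have hdp2 : p.drop e <+: p :=
      prefix_of_prefix_length_le hrest (prefix_append _ _) (by rw [length_drop]; omega)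
    have hHB3 : HB p (p.length - e) := by
      refine ⟨by omega, by omega, ?_⟩
      have h5 := List.prefix_iff_eq_take.mp hdp2
      rw [length_drop] at h5
      rw [show p.length - (p.length - e) = e by omega]
      exact h5.symm
    obtain ⟨hq1', hq2'⟩ := border_transfer hlen hpb hHB3
    have claim1 : q.take e = p.take e := by
      have hek : e ≤ k := by omega
      calc q.take e = (q.take k).take e := by rw [take_take, Nat.min_eq_left hek]
      _ = (p.take k).take e := by rw [hq1]
      _ = p.take e := by rw [take_take, Nat.min_eq_left hek]
    have claim2 : q.drop e <+: q ++ t := by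
      have h6 : q.drop e = p.take (p.length - e) := by
        rw [show q.length - (p.length - e) = e by omega] at hq2'
        exact hq2'
      rw [h6, ← hq1']
      exact (take_prefix _ _).trans (prefix_append _ _)
    have : OccAt q (s ++ q ++ t) j := by
      show q <+: (s ++ q ++ t).drop j
      rw [hdw' q j (by omega), hDeq, ← claim1]
      conv_lhs => rw [← take_append_drop e q]
      exact (prefix_append_right_inj _).mpr claim2
    exact h3 j hjs this

end StmtAux

namespace StmtAux
variable {α : Type*} [DecidableEq α]

lemma phiR_of_not_infix {p q : List α} (hp : p ≠ []) {w : List α} (h : ¬ p <:+: w) :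
    phiR p q w = w := by
  rw [phiR_reverse hp, phiL_of_not_infix (by rwa [List.reverse_infix]), reverse_reverse]

lemma phiR_step {p q : List α} (hne : p ≠ q) (hlen : p.length = q.length) (hp : p ≠ [])
    {w : List α} (h : p <:+: w) : phiR p q w = phiR p q (replR p q w) := by
  have hner : q.reverse ≠ p.reverse := fun hc => hne (reverse_injective hc).symm
  have hstep := phiL_step (q := p.reverse) (p := q.reverse) hner (by simp [hlen])
    (by simpa using hp) (w := w.reverse) (by rwa [List.reverse_infix])
  rw [phiR_reverse hp, phiR_reverse hp, hstep]
  congr 1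
  rw [replR_reverse hp, reverse_reverse]

lemma phiR_phiL {p q : List α} (hne : p ≠ q) (hlen : p.length = q.length)
    (hpb : {x | ProperBorder x p} = {x | ProperBorder x q}) (hq : q ≠ []) (hp : p ≠ []) :
    ∀ w, GoodL q p w → phiR p q (phiL q p w) = phiR p q w := by
  obtain ⟨r, _, hmu⟩ := exists_mu hne hlen
  suffices H : ∀ N w, mu r w < N → GoodL q p w →
      phiR p q (phiL q p w) = phiR p q w from
    fun w hg => H (mu r w + 1) w (Nat.lt_succ_self _) hg
  intro N
  induction N with
  | zero => omega
  | succ N ih =>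
    intro w hw hgood
    by_cases h : q <:+: w
    · have h7 := replR_replL hlen hpb hq hp hgood h
      calc phiR p q (phiL q p w) = phiR p q (phiL q p (replL q p w)) := by
            rw [phiL_step hne hlen hq h]
        _ = phiR p q (replL q p w) :=
            ih (replL q p w)
              (lt_of_lt_of_le (mu_replL_lt hq hlen hmu h) (by omega))
              (goodL_replL hlen hpb hq hgood h)
        _ = phiR p q (replR p q (replL q p w)) := phiR_step hne hlen hp h7.2
        _ = phiR p q w := by rw [h7.1]
    · rw [phiL_of_not_infix h]

lemma properBorder_reverse {x p : List α} :
    ProperBorder x p ↔ ProperBorder x.reverse p.reverse := by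
  unfold ProperBorder Border
  rw [List.reverse_prefix, List.reverse_suffix]
  constructor
  · rintro ⟨⟨h1, h2, h3⟩, h4⟩
    exact ⟨⟨by simpa using h1, h3, h2⟩, fun hc => h4 (reverse_injective hc)⟩
  · rintro ⟨⟨h1, h2, h3⟩, h4⟩
    exact ⟨⟨by simpa using h1, h3, h2⟩, fun hc => h4 (by rw [hc])⟩

lemma pb_set_reverse {p q : List α}
    (hpb : {x | ProperBorder x p} = {x | ProperBorder x q}) :
    {x | ProperBorder x q.reverse} = {x | ProperBorder x p.reverse} := by
  ext x
  simp only [Set.mem_setOf_eq]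
  constructor
  · intro hx
    have h1 : ProperBorder x.reverse q := by
      rw [properBorder_reverse]
      simpa using hx
    have h2 : x.reverse ∈ {x | ProperBorder x p} := hpb ▸ h1
    have h3 : ProperBorder x.reverse p := h2
    rw [properBorder_reverse] at h3
    simpa using h3
  · intro hx
    have h1 : ProperBorder x.reverse p := by
      rw [properBorder_reverse]
      simpa using hx
    have h2 : x.reverse ∈ {x | ProperBorder x q} := hpb ▸ h1
    have h3 : ProperBorder x.reverse q := h2
    rw [properBorder_reverse] at h3
    simpa using h3

lemma phiL_phiR {p q : List α} (hne : p ≠ q) (hlen : p.length = q.length)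
    (hpb : {x | ProperBorder x p} = {x | ProperBorder x q}) (hq : q ≠ []) (hp : p ≠ [])
    {u : List α} (hu : ¬ q <:+: u) : phiL q p (phiR p q u) = u := by
  have hner : q.reverse ≠ p.reverse := fun hc => hne (reverse_injective hc).symm
  have hpr : p.reverse ≠ [] := by simpa using hp
  have hqr : q.reverse ≠ [] := by simpa using hq
  have h9 := phiR_phiL (p := q.reverse) (q := p.reverse) hner (by simp [hlen])
    (pb_set_reverse hpb) hpr hqr u.reverse
    (goodL_of_not_infix (by rwa [List.reverse_infix]))
  have t1 : phiL p.reverse q.reverse u.reverse = (phiR p q u).reverse := by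
    rw [phiR_reverse hp, reverse_reverse]
  have t2 : ∀ v : List α, phiR q.reverse p.reverse v.reverse = (phiL q p v).reverse := by
    intro v
    rw [phiR_reverse hqr, reverse_reverse, reverse_reverse, reverse_reverse]
  rw [t1] at h9
  rw [t2 (phiR p q u), t2 u] at h9
  have h10 := reverse_injective h9
  rw [phiL_of_not_infix hu] at h10
  exact h10

lemma phiR_length {p q : List α} (hp : p ≠ []) (hlen : p.length = q.length)
    (u : List α) : (phiR p q u).length = u.length := by
  rw [phiR_reverse hp, length_reverse, phiL_length (by simpa using hp) (by simp [hlen]),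
    length_reverse]

lemma not_infix_phiR {p q : List α} (hne : p ≠ q) (hlen : p.length = q.length)
    (hp : p ≠ []) (u : List α) : ¬ p <:+: phiR p q u := by
  have hner : q.reverse ≠ p.reverse := fun hc => hne (reverse_injective hc).symm
  rw [phiR_reverse hp]
  intro hc
  have hc2 : p.reverse <:+: (phiL p.reverse q.reverse u.reverse).reverse.reverse :=
    List.reverse_infix.mpr hc
  rw [reverse_reverse] at hc2
  exact not_infix_phiL hner (by simp [hlen]) (by simpa using hp) u.reverse hc2

end StmtAux

/-- Main Theorem: if `p ≠ q` are equal-length words over a finite alphabet with the same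
set of proper borders, then `phiL q p` is a bijection from the length-`n` words avoiding
`p` to the length-`n` words avoiding `q`. -/
theorem stmt_10 {α : Type*} [Fintype α] [DecidableEq α] {p q : List α}
    (hne : p ≠ q) (hlen : p.length = q.length)
    (hpb : {x | ProperBorder x p} = {x | ProperBorder x q}) (n : ℕ) :
    Set.BijOn (phiL q p) {w : List α | w.length = n ∧ ¬ p <:+: w}
      {w : List α | w.length = n ∧ ¬ q <:+: w} := by
  have hq : q ≠ [] := by
    intro hc
    subst hc
    simp only [List.length_nil] at hlen
    exact hne (by simpa using hlen)
  have hp : p ≠ [] := by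
    intro hc
    subst hc
    simp only [List.length_nil] at hlen
    have hq0 : q = [] := by simpa using hlen.symm
    exact hne (by rw [hq0])
  refine ⟨?_, ?_, ?_⟩
  · rintro w ⟨hw1, hw2⟩
    exact ⟨by rw [StmtAux.phiL_length hq hlen]; exact hw1,
      StmtAux.not_infix_phiL hne hlen hq w⟩
  · rintro w1 ⟨hw11, hw12⟩ w2 ⟨hw21, hw22⟩ heq
    have e1 : phiR p q (phiL q p w1) = w1 := by
      rw [StmtAux.phiR_phiL hne hlen hpb hq hp w1 (StmtAux.goodL_of_not_infix hw12)]
      exact StmtAux.phiR_of_not_infix hp hw12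
    have e2 : phiR p q (phiL q p w2) = w2 := by
      rw [StmtAux.phiR_phiL hne hlen hpb hq hp w2 (StmtAux.goodL_of_not_infix hw22)]
      exact StmtAux.phiR_of_not_infix hp hw22
    rw [← e1, ← e2, heq]
  · rintro u ⟨hu1, hu2⟩
    exact ⟨phiR p q u,
      ⟨by rw [StmtAux.phiR_length hp hlen]; exact hu1,
        StmtAux.not_infix_phiR hne hlen hp u⟩,
      StmtAux.phiL_phiR hne hlen hpb hq hp hu2⟩
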